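/- arXiv:1009.4613 — 3 statements merged into one kernel-verified Lean document; each statement's English description precedes it below -/
import Mathlib

section
/- Fix t > 0 and x ∈ ℝ. For an integer n ≥ 1 and a continuous function w : [0,1] → ℝ with w(0) = 0, let G_n(w) = exp(−(1/2)(sinh(2t/n)/cosh(2t/n)) ∑_{j=0}^{n−1} ((n sinh(2t/n))^{1/2} w(j/n) + x/cosh(2t/n)^{j})²). Then for every such w one has 0 ≤ G_n(w) ≤ 1 and lim_{n→∞} G_n(w) = exp(−t ∫₀¹ (x + √(2t) w(s))² ds). -/
open MeasureTheory Real Filter Topology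

lemma riemannSum_tendsto (h : ℝ → ℝ) (hh : ContinuousOn h (Set.Icc 0 1)) :
    Tendsto (fun n : ℕ => (∑ j ∈ Finset.range n, h ((j : ℝ) / n)) / n) atTop
      (𝓝 (∫ s in (0:ℝ)..1, h s)) := by
  rw [Metric.tendsto_atTop]
  intro ε hε
  have hu : UniformContinuousOn h (Set.Icc 0 1) :=
    isCompact_Icc.uniformContinuousOn_of_continuous hh
  rw [Metric.uniformContinuousOn_iff] at hu
  obtain ⟨δ, hδ, hδ'⟩ := hu (ε / 2) (by linarith)
  obtain ⟨N, hN⟩ := exists_nat_gt (1 / δ)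
  refine ⟨max N 1, fun n hn => ?_⟩
  have hn1 : 1 ≤ n := le_trans (le_max_right _ _) hn
  have hn0 : (0:ℝ) < n := by exact_mod_cast hn1
  have hnN : (N : ℝ) ≤ n := Nat.cast_le.2 (le_trans (le_max_left _ _) hn)
  have hinv : 1 / (n:ℝ) < δ := by
    rw [div_lt_iff₀ hn0]
    have h1 : 1 / δ < (n:ℝ) := lt_of_lt_of_le hN hnN
    rw [div_lt_iff₀ hδ] at h1
    linarith
  set a : ℕ → ℝ := fun k => (k : ℝ) / n with ha
  have hle : ∀ k : ℕ, a k ≤ a (k+1) := by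
    intro k
    simp only [ha]
    push_cast
    gcongr <;> linarith
  have hsub : ∀ k : ℕ, k < n → Set.uIcc (a k) (a (k+1)) ⊆ Set.Icc 0 1 := by
    intro k hk
    rw [Set.uIcc_of_le (hle k)]
    apply Set.Icc_subset_Icc
    · positivity
    · rw [div_le_one hn0]
      push_cast
      have : (k:ℝ) + 1 ≤ n := by exact_mod_cast hk
      linarith
  have hint : ∀ k : ℕ, k < n → IntervalIntegrable h volume (a k) (a (k+1)) :=
    fun k hk => (hh.mono (hsub k hk)).intervalIntegrable
  have htot : ∑ k ∈ Finset.range n, ∫ s in a k..a (k+1), h s = ∫ s in (0:ℝ)..1, h s := by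
    rw [intervalIntegral.sum_integral_adjacent_intervals hint]
    norm_num [ha, div_self hn0.ne']
  have hpiece : ∀ k : ℕ, k < n →
      |h (a k) / n - ∫ s in a k..a (k+1), h s| ≤ ε / 2 / n := by
    intro k hk
    have hlen : a (k+1) - a k = 1 / n := by simp only [ha]; push_cast; ring
    have hconst : ∫ s in a k..a (k+1), (fun _ => h (a k)) s = h (a k) / n := by
      rw [intervalIntegral.integral_const, hlen]
      simp [div_eq_mul_inv, mul_comm]
    rw [← hconst, ← intervalIntegral.integral_sub intervalIntegrable_const (hint k hk)]
    have hbound : ∀ s ∈ Set.uIoc (a k) (a (k+1)), ‖h (a k) - h s‖ ≤ ε / 2 := by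
      intro s hs
      rw [Set.uIoc_of_le (hle k)] at hs
      have hsub' := hsub k hk
      rw [Set.uIcc_of_le (hle k)] at hsub'
      have hsmem : s ∈ Set.Icc (0:ℝ) 1 := hsub' ⟨hs.1.le, hs.2⟩
      have hamem : a k ∈ Set.Icc (0:ℝ) 1 := hsub' ⟨le_refl _, hle k⟩
      have hdist : dist (a k) s < δ := by
        rw [Real.dist_eq, abs_of_nonpos (by linarith [hs.1.le])]
        have h2 : s ≤ a k + 1 / n := by linarith [hs.2, hlen]
        linarith
      rw [Real.norm_eq_abs, ← Real.dist_eq]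
      exact (hδ' _ hamem _ hsmem hdist).le
    have := intervalIntegral.norm_integral_le_of_norm_le_const hbound
    rw [Real.norm_eq_abs] at this
    refine this.trans (le_of_eq ?_)
    rw [show |a (k+1) - a k| = 1 / (n:ℝ) by rw [hlen]; exact abs_of_nonneg (by positivity)]
    ring
  calc dist ((∑ j ∈ Finset.range n, h ((j : ℝ) / n)) / n) (∫ s in (0:ℝ)..1, h s)
      = |∑ k ∈ Finset.range n, (h (a k) / n - ∫ s in a k..a (k+1), h s)| := by
        rw [Real.dist_eq, ← htot, Finset.sum_sub_distrib, ← Finset.sum_div]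
    _ ≤ ∑ k ∈ Finset.range n, |h (a k) / n - ∫ s in a k..a (k+1), h s| :=
        Finset.abs_sum_le_sum_abs _ _
    _ ≤ ∑ k ∈ Finset.range n, ε / 2 / n := Finset.sum_le_sum (fun k hk =>
        hpiece k (Finset.mem_range.mp hk))
    _ = ε / 2 := by rw [Finset.sum_const, Finset.card_range, nsmul_eq_mul]; field_simp
    _ < ε := by linarith

/-- **Lemma (convergence of `G_n`).** For `t > 0`, `x ∈ ℝ` and `w` continuous on `[0,1]`
with `w(0) = 0`, the factor
`G_n(w) = exp(−(1/2)(sinh(2t/n)/cosh(2t/n)) ∑_{j=0}^{n−1} (√(n sinh(2t/n)) w(j/n) + x/cosh(2t/n)^j)²)`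
satisfies `0 ≤ G_n(w) ≤ 1` and `G_n(w) → exp(−t ∫₀¹ (x + √(2t) w(s))² ds)` as `n → ∞`. -/
theorem Gn_le_one_and_tendsto
    (t : ℝ) (ht : 0 < t) (x : ℝ)
    (w : ℝ → ℝ) (hw : ContinuousOn w (Set.Icc 0 1)) (hw0 : w 0 = 0) :
    let G : ℕ → ℝ := fun n => Real.exp (-(1 / 2) *
      (Real.sinh (2 * t / n) / Real.cosh (2 * t / n)) *
      ∑ j ∈ Finset.range n,
        (Real.sqrt ((n : ℝ) * Real.sinh (2 * t / n)) * w ((j : ℝ) / n) +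
          x / Real.cosh (2 * t / n) ^ j) ^ 2)
    (∀ n : ℕ, 1 ≤ n → 0 ≤ G n ∧ G n ≤ 1) ∧
      Tendsto G atTop
        (𝓝 (Real.exp (-(t * ∫ s in (0:ℝ)..1, (x + Real.sqrt (2 * t) * w s) ^ 2)))) := by
  intro G
  have sq2t_nonneg : 0 ≤ Real.sqrt (2 * t) := Real.sqrt_nonneg _
  constructor
  · intro n hn
    have hn0 : (0:ℝ) < n := by exact_mod_cast hn
    have ha : (0:ℝ) ≤ 2 * t / n := by positivity
    have hS : (0:ℝ) ≤ ∑ j ∈ Finset.range n,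
        (Real.sqrt ((n : ℝ) * Real.sinh (2 * t / n)) * w ((j : ℝ) / n) +
          x / Real.cosh (2 * t / n) ^ j) ^ 2 :=
      Finset.sum_nonneg fun j _ => sq_nonneg _
    refine ⟨(Real.exp_pos _).le, ?_⟩
    rw [show G n = Real.exp (-(1 / 2) *
      (Real.sinh (2 * t / n) / Real.cosh (2 * t / n)) *
      ∑ j ∈ Finset.range n,
        (Real.sqrt ((n : ℝ) * Real.sinh (2 * t / n)) * w ((j : ℝ) / n) +
          x / Real.cosh (2 * t / n) ^ j) ^ 2) from rfl, Real.exp_le_one_iff]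
    have hr : (0:ℝ) ≤ Real.sinh (2 * t / n) / Real.cosh (2 * t / n) :=
      div_nonneg (Real.sinh_nonneg_iff.mpr ha) (Real.cosh_pos _).le
    nlinarith [mul_nonneg hr hS]
  · -- convergence
    have hu0 : Tendsto (fun n : ℕ => 2 * t / n) atTop (𝓝 0) :=
      tendsto_const_div_atTop_nhds_zero_nat (2 * t)
    have hupos : ∀ n : ℕ, 1 ≤ n → 0 < 2 * t / n := fun n hn =>
      div_pos (by linarith) (by exact_mod_cast hn)
    have hu' : Tendsto (fun n : ℕ => 2 * t / n) atTop (𝓝[≠] 0) := by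
      apply tendsto_nhdsWithin_of_tendsto_nhds_of_eventually_within _ hu0
      filter_upwards [eventually_ge_atTop 1] with n hn
      exact (hupos n hn).ne'
    have hslope : Tendsto (fun y : ℝ => Real.sinh y / y) (𝓝[≠] 0) (𝓝 1) := by
      have h := hasDerivAt_iff_tendsto_slope.mp (Real.hasDerivAt_sinh 0)
      rw [Real.cosh_zero] at h
      refine h.congr fun y => ?_
      rw [slope_def_field]
      simp
    have L1 : Tendsto (fun n : ℕ => (n:ℝ) * Real.sinh (2 * t / n)) atTop (𝓝 (2 * t)) := by
      have h2 : Tendsto (fun n : ℕ => 2 * t * (Real.sinh (2 * t / n) / (2 * t / n)))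
          atTop (𝓝 (2 * t * 1)) := tendsto_const_nhds.mul (hslope.comp hu')
      rw [mul_one] at h2
      refine h2.congr' ?_
      filter_upwards [eventually_ge_atTop 1] with n hn
      have hn0 : (0:ℝ) < n := by exact_mod_cast hn
      field_simp
    have Lsinh : Tendsto (fun n : ℕ => Real.sinh (2 * t / n)) atTop (𝓝 0) := by
      have := (Real.continuous_sinh.tendsto 0).comp hu0
      simpa [Function.comp_def] using this
    have Lcosh : Tendsto (fun n : ℕ => Real.cosh (2 * t / n)) atTop (𝓝 1) := by
      have := (Real.continuous_cosh.tendsto 0).comp hu0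
      simpa [Function.comp_def] using this
    have L2 : Tendsto (fun n : ℕ => Real.sqrt ((n:ℝ) * Real.sinh (2 * t / n))) atTop
        (𝓝 (Real.sqrt (2 * t))) := (Real.continuous_sqrt.tendsto _).comp L1
    have L4 : Tendsto (fun n : ℕ => Real.cosh (2 * t / n) ^ n) atTop (𝓝 1) := by
      have hup : Tendsto (fun n : ℕ => Real.exp ((n:ℝ) * Real.sinh (2 * t / n) ^ 2))
          atTop (𝓝 1) := by
        have h0 : Tendsto (fun n : ℕ => (n:ℝ) * Real.sinh (2 * t / n) ^ 2) atTop (𝓝 0) := by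
          have := L1.mul Lsinh
          rw [mul_zero] at this
          refine this.congr fun n => ?_
          ring
        have := (Real.continuous_exp.tendsto 0).comp h0
        simpa [Function.comp_def] using this
      refine tendsto_of_tendsto_of_tendsto_of_le_of_le tendsto_const_nhds hup ?_ ?_
      · intro n
        exact one_le_pow₀ (Real.one_le_cosh _)
      · intro n
        have hc : Real.cosh (2 * t / n) ≤ Real.exp (Real.sinh (2 * t / n) ^ 2) := by
          have h1 : Real.cosh (2 * t / n) ≤ Real.sinh (2 * t / n) ^ 2 + 1 := by
            nlinarith [Real.cosh_sq (2 * t / n), Real.one_le_cosh (2 * t / n)]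
          exact h1.trans (by linarith [Real.add_one_le_exp (Real.sinh (2 * t / n) ^ 2)])
        calc Real.cosh (2 * t / n) ^ n ≤ Real.exp (Real.sinh (2 * t / n) ^ 2) ^ n :=
              pow_le_pow_left₀ (Real.cosh_pos _).le hc n
          _ = Real.exp ((n:ℝ) * Real.sinh (2 * t / n) ^ 2) := (Real.exp_nat_mul _ n).symm
    have L4inv : Tendsto (fun n : ℕ => (Real.cosh (2 * t / n) ^ n)⁻¹) atTop (𝓝 1) := by
      have := L4.inv₀ one_ne_zero
      simpa using this
    -- bound on w
    obtain ⟨M₀, hM₀⟩ := isCompact_Icc.exists_bound_of_continuousOn hw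
    set M : ℝ := max M₀ 0 with hM_def
    have hM0 : 0 ≤ M := le_max_right _ _
    have hM : ∀ s ∈ Set.Icc (0:ℝ) 1, |w s| ≤ M := fun s hs =>
      le_trans (hM₀ s hs) (le_max_left _ _)
    set C : ℝ := Real.sqrt (2 * t) * M + |x| with hC_def
    have hC0 : 0 ≤ C := add_nonneg (mul_nonneg sq2t_nonneg hM0) (abs_nonneg _)
    set h : ℝ → ℝ := fun s => (x + Real.sqrt (2 * t) * w s) ^ 2 with hh_def
    have hhcont : ContinuousOn h (Set.Icc 0 1) :=
      ((continuousOn_const.add (continuousOn_const.mul hw)).pow 2)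
    have hR := riemannSum_tendsto h hhcont
    set η : ℕ → ℝ := fun n =>
      |Real.sqrt ((n:ℝ) * Real.sinh (2 * t / n)) - Real.sqrt (2 * t)| * M +
        |x| * (1 - (Real.cosh (2 * t / n) ^ n)⁻¹) with hη_def
    have hη0 : Tendsto η atTop (𝓝 0) := by
      have h1 : Tendsto (fun n : ℕ =>
          |Real.sqrt ((n:ℝ) * Real.sinh (2 * t / n)) - Real.sqrt (2 * t)|) atTop (𝓝 0) := by
        have := (L2.sub_const (Real.sqrt (2 * t))).abs
        rw [sub_self, abs_zero] at this
        exact this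
      have h2 : Tendsto (fun n : ℕ => 1 - (Real.cosh (2 * t / n) ^ n)⁻¹) atTop (𝓝 0) := by
        have := (tendsto_const_nhds (x := (1:ℝ))).sub L4inv
        rw [sub_self] at this
        exact this
      have h3 := (h1.mul_const M).add ((tendsto_const_nhds (x := |x|)).mul h2)
      rw [show (0:ℝ) * M + |x| * 0 = 0 by ring] at h3
      exact h3
    have hηnn : ∀ n : ℕ, 0 ≤ η n := by
      intro n
      have hinv : (Real.cosh (2 * t / n) ^ n)⁻¹ ≤ 1 :=
        inv_le_one_of_one_le₀ (one_le_pow₀ (Real.one_le_cosh _))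
      exact add_nonneg (mul_nonneg (abs_nonneg _) hM0)
        (mul_nonneg (abs_nonneg _) (by linarith))
    set S : ℕ → ℝ := fun n => ∑ j ∈ Finset.range n,
        (Real.sqrt ((n : ℝ) * Real.sinh (2 * t / n)) * w ((j : ℝ) / n) +
          x / Real.cosh (2 * t / n) ^ j) ^ 2 with hS_def
    set A : ℕ → ℝ := fun n => S n / n with hA_def
    set R : ℕ → ℝ := fun n => (∑ j ∈ Finset.range n, h ((j : ℝ) / n)) / n with hR_def
    have hdiff : ∀ n : ℕ, 1 ≤ n → |A n - R n| ≤ η n * (2 * C + η n) := by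
      intro n hn
      have hn0 : (0:ℝ) < n := by exact_mod_cast hn
      have key : ∀ j ∈ Finset.range n,
          |(Real.sqrt ((n : ℝ) * Real.sinh (2 * t / n)) * w ((j : ℝ) / n) +
              x / Real.cosh (2 * t / n) ^ j) ^ 2 - h ((j : ℝ) / n)| ≤ η n * (2 * C + η n) := by
        intro j hj
        rw [Finset.mem_range] at hj
        have hjn : (j:ℝ) / n ∈ Set.Icc (0:ℝ) 1 := by
          constructor
          · positivity
          · rw [div_le_one hn0]
            exact_mod_cast hj.le
        set wj := w ((j:ℝ) / n) with hwj_def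
        have hwj : |wj| ≤ M := hM _ hjn
        set f := Real.sqrt ((n : ℝ) * Real.sinh (2 * t / n)) * wj +
          x / Real.cosh (2 * t / n) ^ j with hf_def
        set g := x + Real.sqrt (2 * t) * wj with hg_def
        have hcosh1 : 1 ≤ Real.cosh (2 * t / n) := Real.one_le_cosh _
        have hpowj : 1 ≤ Real.cosh (2 * t / n) ^ j := one_le_pow₀ hcosh1
        have hpownj : Real.cosh (2 * t / n) ^ j ≤ Real.cosh (2 * t / n) ^ n :=
          pow_le_pow_right₀ hcosh1 hj.le
        have hmono : (Real.cosh (2 * t / n) ^ n)⁻¹ ≤ (Real.cosh (2 * t / n) ^ j)⁻¹ :=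
          inv_anti₀ (by positivity) hpownj
        have hfg : |f - g| ≤ η n := by
          have e : f - g = (Real.sqrt ((n : ℝ) * Real.sinh (2 * t / n)) - Real.sqrt (2 * t)) * wj
              + x * ((Real.cosh (2 * t / n) ^ j)⁻¹ - 1) := by
            rw [hf_def, hg_def, div_eq_mul_inv]
            ring
          rw [e]
          have habs : |(Real.cosh (2 * t / n) ^ j)⁻¹ - 1| ≤ 1 - (Real.cosh (2 * t / n) ^ n)⁻¹ := by
            rw [abs_of_nonpos (by
              have : (Real.cosh (2 * t / n) ^ j)⁻¹ ≤ 1 := inv_le_one_of_one_le₀ hpowj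
              linarith)]
            linarith
          calc |(Real.sqrt ((n : ℝ) * Real.sinh (2 * t / n)) - Real.sqrt (2 * t)) * wj
              + x * ((Real.cosh (2 * t / n) ^ j)⁻¹ - 1)|
              ≤ |(Real.sqrt ((n : ℝ) * Real.sinh (2 * t / n)) - Real.sqrt (2 * t)) * wj|
                + |x * ((Real.cosh (2 * t / n) ^ j)⁻¹ - 1)| := abs_add_le _ _
            _ = |Real.sqrt ((n : ℝ) * Real.sinh (2 * t / n)) - Real.sqrt (2 * t)| * |wj|
                + |x| * |(Real.cosh (2 * t / n) ^ j)⁻¹ - 1| := by rw [abs_mul, abs_mul]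
            _ ≤ |Real.sqrt ((n : ℝ) * Real.sinh (2 * t / n)) - Real.sqrt (2 * t)| * M
                + |x| * (1 - (Real.cosh (2 * t / n) ^ n)⁻¹) :=
                add_le_add (mul_le_mul_of_nonneg_left hwj (abs_nonneg _))
                  (mul_le_mul_of_nonneg_left habs (abs_nonneg _))
            _ = η n := rfl
        have hg_le : |g| ≤ C := by
          calc |g| ≤ |x| + |Real.sqrt (2 * t) * wj| := abs_add_le _ _
            _ = |x| + Real.sqrt (2 * t) * |wj| := by
                rw [abs_mul, abs_of_nonneg sq2t_nonneg]
            _ ≤ |x| + Real.sqrt (2 * t) * M := by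
                have := mul_le_mul_of_nonneg_left hwj sq2t_nonneg
                linarith
            _ = C := by rw [hC_def]; ring
        have hfpg : |f + g| ≤ 2 * C + η n := by
          calc |f + g| = |(f - g) + 2 * g| := by ring_nf
            _ ≤ |f - g| + |2 * g| := abs_add_le _ _
            _ = |f - g| + 2 * |g| := by rw [abs_mul]; norm_num
            _ ≤ η n + 2 * C := add_le_add hfg (by linarith)
            _ = 2 * C + η n := by ring
        have hhg : h ((j:ℝ) / n) = g ^ 2 := rfl
        rw [hhg]
        calc |f ^ 2 - g ^ 2| = |f - g| * |f + g| := by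
              rw [← abs_mul]
              congr 1
              ring
          _ ≤ η n * (2 * C + η n) :=
              mul_le_mul hfg hfpg (abs_nonneg _) (hηnn n)
      have heq : A n - R n = (∑ j ∈ Finset.range n,
          ((Real.sqrt ((n : ℝ) * Real.sinh (2 * t / n)) * w ((j : ℝ) / n) +
            x / Real.cosh (2 * t / n) ^ j) ^ 2 - h ((j : ℝ) / n))) / n := by
        rw [hA_def, hR_def, hS_def, ← sub_div, ← Finset.sum_sub_distrib]
      rw [heq, abs_div, abs_of_nonneg hn0.le, div_le_iff₀ hn0]
      calc |∑ j ∈ Finset.range n,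
          ((Real.sqrt ((n : ℝ) * Real.sinh (2 * t / n)) * w ((j : ℝ) / n) +
            x / Real.cosh (2 * t / n) ^ j) ^ 2 - h ((j : ℝ) / n))|
          ≤ ∑ j ∈ Finset.range n,
            |(Real.sqrt ((n : ℝ) * Real.sinh (2 * t / n)) * w ((j : ℝ) / n) +
              x / Real.cosh (2 * t / n) ^ j) ^ 2 - h ((j : ℝ) / n)| :=
            Finset.abs_sum_le_sum_abs _ _
        _ ≤ ∑ _j ∈ Finset.range n, η n * (2 * C + η n) := Finset.sum_le_sum key
        _ = η n * (2 * C + η n) * n := by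
            rw [Finset.sum_const, Finset.card_range, nsmul_eq_mul]
            ring
    have hAR0 : Tendsto (fun n => A n - R n) atTop (𝓝 0) := by
      have hb : Tendsto (fun n => η n * (2 * C + η n)) atTop (𝓝 0) := by
        have := hη0.mul ((tendsto_const_nhds (x := 2 * C)).add hη0)
        simpa using this
      apply squeeze_zero_norm' _ hb
      filter_upwards [eventually_ge_atTop 1] with n hn
      simpa [Real.norm_eq_abs] using hdiff n hn
    have hA : Tendsto A atTop (𝓝 (∫ s in (0:ℝ)..1, h s)) := by
      have := hR.add hAR0
      rw [add_zero] at this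
      refine this.congr fun n => ?_
      ring_nf
    have hc : Tendsto (fun n : ℕ => (n:ℝ) * Real.sinh (2 * t / n) / (2 * Real.cosh (2 * t / n)))
        atTop (𝓝 t) := by
      have hden : Tendsto (fun n : ℕ => 2 * Real.cosh (2 * t / n)) atTop (𝓝 2) := by
        have := (tendsto_const_nhds (x := (2:ℝ))).mul Lcosh
        simpa using this
      have := L1.div hden (by norm_num)
      rw [show 2 * t / 2 = t by ring] at this
      exact this
    have key : Tendsto (fun n : ℕ => (1 / 2) *
        (Real.sinh (2 * t / n) / Real.cosh (2 * t / n)) * S n) atTop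
        (𝓝 (t * ∫ s in (0:ℝ)..1, h s)) := by
      have hm := hc.mul hA
      refine hm.congr' ?_
      filter_upwards [eventually_ge_atTop 1] with n hn
      have hn0 : (0:ℝ) < n := by exact_mod_cast hn
      have hch : Real.cosh (2 * t / n) ≠ 0 := (Real.cosh_pos _).ne'
      rw [hA_def]
      field_simp
    have hexp := (Real.continuous_exp.tendsto _).comp key.neg
    refine hexp.congr fun n => ?_
    show Real.exp (-((1 / 2) * (Real.sinh (2 * t / n) / Real.cosh (2 * t / n)) * S n)) = G n
    rw [show G n = Real.exp (-(1 / 2) *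
      (Real.sinh (2 * t / n) / Real.cosh (2 * t / n)) * S n) from rfl]
    congr 1
    ring
end

section
/- Fix t > 0 and x ∈ ℝ. Let c be continuous on [0,∞)×ℝ with lower bound m ∈ ℝ, having at each point of (0,∞)×ℝ an x-derivative c_x which extends to a continuous bounded function on [0,∞)×ℝ. For an integer n ≥ 1 and a continuous function w : [0,1] → ℝ with w(0) = 0, let H_n(w) = exp(−(t/n) ∑_{j=0}^{n−1} c((n−j)t/n, (n sinh(2t/n))^{1/2} w(j/n) + x/cosh(2t/n)^{j})). Then for every such w one has 0 ≤ H_n(w) ≤ e^{−mt} and lim_{n→∞} H_n(w) = exp(−t ∫₀¹ c(t(1−s), √(2t) w(s) + x) ds). -/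
open MeasureTheory Real Filter Topology


lemma riemann_sum_tendsto' {g : ℝ → ℝ} (hg : ContinuousOn g (Set.Icc 0 1)) :
    Tendsto (fun n : ℕ => (∑ j ∈ Finset.range n, g ((j : ℝ) / n)) / n) atTop
      (𝓝 (∫ s in (0:ℝ)..1, g s)) := by
  have huc := isCompact_Icc.uniformContinuousOn_of_continuous hg
  rw [Metric.uniformContinuousOn_iff] at huc
  rw [Metric.tendsto_atTop]
  intro ε hε
  obtain ⟨δ, hδ, hδc⟩ := huc (ε/2) (by positivity)
  obtain ⟨N, hN⟩ := exists_nat_gt (1/δ)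
  refine ⟨max N 1, fun n hn => ?_⟩
  have hn1 : 1 ≤ n := le_trans (le_max_right _ _) hn
  have hnN : (N:ℝ) ≤ n := Nat.cast_le.2 (le_trans (le_max_left _ _) hn)
  have hnpos : (0:ℝ) < n := by exact_mod_cast hn1
  have hdn : 1/(n:ℝ) < δ := by
    rw [div_lt_iff₀ hnpos]
    have h1 : 1 < (n:ℝ) * δ := (div_lt_iff₀ hδ).mp (lt_of_lt_of_le hN hnN)
    linarith
  set a : ℕ → ℝ := fun k => (k:ℝ) / n with ha
  have hle : ∀ k : ℕ, a k ≤ a (k+1) := by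
    intro k
    simp only [ha]
    gcongr
    first
    | omega
    | (push_cast; linarith)
  have hsub : ∀ k < n, Set.Icc (a k) (a (k+1)) ⊆ Set.Icc 0 1 := by
    intro k hk
    apply Set.Icc_subset_Icc
    · exact div_nonneg (Nat.cast_nonneg k) hnpos.le
    · rw [div_le_one hnpos]; push_cast
      exact_mod_cast Nat.cast_le.2 (Nat.succ_le_of_lt hk)
  have hint : ∀ k < n, IntervalIntegrable g volume (a k) (a (k+1)) := by
    intro k hk
    apply ContinuousOn.intervalIntegrable
    apply hg.mono
    rw [Set.uIcc_of_le (hle k)]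
    exact hsub k hk
  have hsplit : ∫ s in (0:ℝ)..1, g s = ∑ j ∈ Finset.range n, ∫ s in a j..a (j+1), g s := by
    rw [intervalIntegral.sum_integral_adjacent_intervals hint]
    congr 1
    · simp [ha]
    · simp [ha, div_self hnpos.ne']
  have hstep : ∀ j, a (j+1) - a j = 1/(n:ℝ) := by
    intro j; simp only [ha]; push_cast; ring
  have hterm : ∀ j ∈ Finset.range n,
      |g ((j:ℝ)/n) / n - ∫ s in a j..a (j+1), g s| ≤ ε/2 * (1/n) := by
    intro j hj
    have hj' := Finset.mem_range.mp hj
    have hconst : g ((j:ℝ)/n) / n = ∫ _ in a j..a (j+1), g ((j:ℝ)/n) := by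
      rw [intervalIntegral.integral_const, hstep j, smul_eq_mul]
      ring
    rw [hconst, ← intervalIntegral.integral_sub intervalIntegrable_const (hint j hj')]
    have := intervalIntegral.norm_integral_le_of_norm_le_const
      (f := fun s => g ((j:ℝ)/n) - g s) (a := a j) (b := a (j+1)) (C := ε/2) ?_
    · rw [Real.norm_eq_abs] at this
      calc |∫ s in a j..a (j+1), (g ((j:ℝ)/n) - g s)| ≤ ε/2 * |a (j+1) - a j| := this
        _ = ε/2 * (1/n) := by rw [hstep j, abs_of_pos (by positivity)]
    · intro s hs
      rw [Set.uIoc_of_le (hle j)] at hs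
      have hs1 : s ∈ Set.Icc (0:ℝ) 1 := hsub j hj' ⟨hs.1.le, hs.2⟩
      have hj1 : (j:ℝ)/n ∈ Set.Icc (0:ℝ) 1 := hsub j hj' ⟨le_rfl, hle j⟩
      have hdist : dist ((j:ℝ)/n) s < δ := by
        have h1 : a j < s := hs.1
        have h2 : s ≤ a (j+1) := hs.2
        have h3 := hstep j
        rw [Real.dist_eq, abs_sub_comm, abs_of_pos (by simp only [ha] at h1; linarith)]
        simp only [ha] at h1 h2 h3 ⊢
        linarith
      have := hδc _ hj1 _ hs1 hdist
      rw [Real.dist_eq] at this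
      exact this.le
  -- assemble
  have hsum : |(∑ j ∈ Finset.range n, g ((j:ℝ)/n)) / n - ∫ s in (0:ℝ)..1, g s| ≤ ε/2 := by
    rw [hsplit, Finset.sum_div, ← Finset.sum_sub_distrib]
    calc |∑ j ∈ Finset.range n, (g ((j:ℝ)/n) / n - ∫ s in a j..a (j+1), g s)|
        ≤ ∑ j ∈ Finset.range n, |g ((j:ℝ)/n) / n - ∫ s in a j..a (j+1), g s| :=
          Finset.abs_sum_le_sum_abs _ _
      _ ≤ ∑ _j ∈ Finset.range n, ε/2 * (1/(n:ℝ)) := Finset.sum_le_sum hterm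
      _ = ε/2 := by
          rw [Finset.sum_const, Finset.card_range, nsmul_eq_mul]
          field_simp
  rw [Real.dist_eq]
  calc |(∑ j ∈ Finset.range n, g ((j:ℝ)/n)) / n - ∫ s in (0:ℝ)..1, g s| ≤ ε/2 := hsum
    _ < ε := by linarith


lemma sqrt_nsinh_tendsto {t : ℝ} (ht : 0 < t) :
    Tendsto (fun n : ℕ => Real.sqrt ((n : ℝ) * Real.sinh (2 * t / n))) atTop
      (𝓝 (Real.sqrt (2 * t))) := by
  have hu : Tendsto (fun n : ℕ => 2 * t / (n:ℝ)) atTop (𝓝[≠] 0) := by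
    rw [tendsto_nhdsWithin_iff]
    constructor
    · exact tendsto_const_div_atTop_nhds_zero_nat (2*t)
    · filter_upwards [eventually_ge_atTop 1] with n hn
      have : (0:ℝ) < n := by exact_mod_cast hn
      simp only [Set.mem_compl_iff, Set.mem_singleton_iff]
      positivity
  have hslope : Tendsto (slope Real.sinh 0) (𝓝[≠] 0) (𝓝 (Real.cosh 0)) :=
    hasDerivAt_iff_tendsto_slope.mp (Real.hasDerivAt_sinh 0)
  have h3 : Tendsto (fun n : ℕ => slope Real.sinh 0 (2 * t / n)) atTop (𝓝 1) := by
    rw [← Real.cosh_zero]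
    exact hslope.comp hu
  have h4 : Tendsto (fun n : ℕ => 2 * t * slope Real.sinh 0 (2 * t / n)) atTop
      (𝓝 (2 * t)) := by
    have := h3.const_mul (2*t)
    simpa using this
  have h5 : Tendsto (fun n : ℕ => (n:ℝ) * Real.sinh (2 * t / n)) atTop (𝓝 (2*t)) := by
    apply h4.congr'
    filter_upwards [eventually_ge_atTop 1] with n hn
    have hn0 : (0:ℝ) < n := by exact_mod_cast hn
    rw [slope_def_field]
    field_simp
    simp; ring
  exact (Real.continuous_sqrt.tendsto _).comp h5

/-- **Lemma (convergence of `H_n`).** For `t > 0`, `x ∈ ℝ`, a potential `c` continuous on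
`[0,∞)×ℝ` bounded below by `m`, whose `x`-derivative extends to a continuous bounded
function on `[0,∞)×ℝ`, and `w` continuous on `[0,1]` with `w(0) = 0`, the factor
`H_n(w) = exp(−(t/n) ∑_{j=0}^{n−1} c((n−j)t/n, √(n sinh(2t/n)) w(j/n) + x/cosh(2t/n)^j))`
satisfies `0 ≤ H_n(w) ≤ e^{−mt}` and
`H_n(w) → exp(−t ∫₀¹ c(t(1−s), √(2t) w(s) + x) ds)` as `n → ∞`. -/
theorem Hn_bounds_and_tendsto
    (t : ℝ) (ht : 0 < t) (x : ℝ)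
    (c : ℝ → ℝ → ℝ)
    (hc_cont : ContinuousOn (fun p : ℝ × ℝ => c p.1 p.2) (Set.Ici 0 ×ˢ Set.univ))
    (m : ℝ) (hm : ∀ s ∈ Set.Ici (0:ℝ), ∀ y : ℝ, m ≤ c s y)
    (cx : ℝ → ℝ → ℝ)
    (hcx_deriv : ∀ s > (0:ℝ), ∀ y : ℝ, HasDerivAt (fun z => c s z) (cx s y) y)
    (hcx_cont : ContinuousOn (fun p : ℝ × ℝ => cx p.1 p.2) (Set.Ici 0 ×ˢ Set.univ))
    (hcx_bdd : ∃ M : ℝ, ∀ s ∈ Set.Ici (0:ℝ), ∀ y : ℝ, |cx s y| ≤ M)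
    (w : ℝ → ℝ) (hw : ContinuousOn w (Set.Icc 0 1)) (hw0 : w 0 = 0) :
    let H : ℕ → ℝ := fun n => Real.exp (-(t / n) *
      ∑ j ∈ Finset.range n,
        c (((n : ℝ) - j) * t / n)
          (Real.sqrt ((n : ℝ) * Real.sinh (2 * t / n)) * w ((j : ℝ) / n) +
            x / Real.cosh (2 * t / n) ^ j))
    (∀ n : ℕ, 1 ≤ n → 0 ≤ H n ∧ H n ≤ Real.exp (-(m * t))) ∧
      Tendsto H atTop
        (𝓝 (Real.exp (-(t * ∫ s in (0:ℝ)..1,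
          c (t * (1 - s)) (Real.sqrt (2 * t) * w s + x))))) := by
  intro H
  have hH : H = fun n => Real.exp (-(t / n) *
      ∑ j ∈ Finset.range n,
        c (((n : ℝ) - j) * t / n)
          (Real.sqrt ((n : ℝ) * Real.sinh (2 * t / n)) * w ((j : ℝ) / n) +
            x / Real.cosh (2 * t / n) ^ j)) := rfl
  constructor
  · -- boundedness
    intro n hn
    refine ⟨Real.exp_nonneg _, ?_⟩
    have hnpos : (0:ℝ) < n := by exact_mod_cast hn
    rw [hH]
    simp only []
    rw [Real.exp_le_exp]
    have hsum : (n:ℝ) * m ≤ ∑ j ∈ Finset.range n,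
        c (((n : ℝ) - j) * t / n)
          (Real.sqrt ((n : ℝ) * Real.sinh (2 * t / n)) * w ((j : ℝ) / n) +
            x / Real.cosh (2 * t / n) ^ j) := by
      have hterm : ∀ j ∈ Finset.range n, m ≤
          c (((n : ℝ) - j) * t / n)
            (Real.sqrt ((n : ℝ) * Real.sinh (2 * t / n)) * w ((j : ℝ) / n) +
              x / Real.cosh (2 * t / n) ^ j) := by
        intro j hj
        apply hm
        have hj' : (j:ℝ) < n := by exact_mod_cast Finset.mem_range.mp hj
        have : (0:ℝ) ≤ ((n:ℝ) - j) * t / n :=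
          div_nonneg (mul_nonneg (by linarith) ht.le) hnpos.le
        exact this
      have := Finset.card_nsmul_le_sum (Finset.range n) _ m hterm
      simpa [Finset.card_range, nsmul_eq_mul] using this
    have h2 : t / n * ((n:ℝ) * m) ≤ t / n * ∑ j ∈ Finset.range n,
        c (((n : ℝ) - j) * t / n)
          (Real.sqrt ((n : ℝ) * Real.sinh (2 * t / n)) * w ((j : ℝ) / n) +
            x / Real.cosh (2 * t / n) ^ j) :=
      mul_le_mul_of_nonneg_left hsum (by positivity)
    have h3 : t / n * ((n:ℝ) * m) = m * t := by field_simp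
    linarith
  · -- convergence
    obtain ⟨W, hW⟩ := isCompact_Icc.exists_bound_of_continuousOn hw
    have hWs : ∀ s ∈ Set.Icc (0:ℝ) 1, |w s| ≤ W := fun s hs => by
      have := hW s hs; rwa [Real.norm_eq_abs] at this
    have hW0 : 0 ≤ W := (abs_nonneg _).trans (hWs 0 ⟨le_rfl, zero_le_one⟩)
    have hmap : Set.MapsTo (fun s : ℝ => (t * (1 - s), Real.sqrt (2*t) * w s + x))
        (Set.Icc 0 1) (Set.Ici 0 ×ˢ Set.univ) := by
      intro s hs
      refine ⟨?_, trivial⟩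
      have := hs.2
      simp only [Set.mem_Ici]
      nlinarith
    have hg : ContinuousOn (fun s => c (t * (1 - s)) (Real.sqrt (2*t) * w s + x))
        (Set.Icc 0 1) := by
      have hprod : ContinuousOn (fun s : ℝ => (t * (1 - s), Real.sqrt (2*t) * w s + x))
          (Set.Icc 0 1) :=
        ((continuous_const.mul (continuous_const.sub continuous_id)).continuousOn).prodMk
          ((continuousOn_const.mul hw).add continuousOn_const)
      simpa [Function.comp_def] using hc_cont.comp hprod hmap
    have hR := riemann_sum_tendsto' hg
    have hα := sqrt_nsinh_tendsto ht
    have hd : Tendsto (fun n : ℕ => |x| * (1 - Real.exp (-(2*t^2) / n))) atTop (𝓝 0) := by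
      have h1 : Tendsto (fun n : ℕ => -(2*t^2) / (n:ℝ)) atTop (𝓝 0) :=
        tendsto_const_div_atTop_nhds_zero_nat _
      have h2 := (Real.continuous_exp.tendsto 0).comp h1
      rw [Real.exp_zero] at h2
      have h3 := (tendsto_const_nhds (x := (1:ℝ))).sub h2
      have h4 := h3.const_mul |x|
      simpa using h4
    have hE : Tendsto (fun n : ℕ =>
        |Real.sqrt ((n:ℝ) * Real.sinh (2*t/n)) - Real.sqrt (2*t)| * W
          + |x| * (1 - Real.exp (-(2*t^2)/n))) atTop (𝓝 0) := by
      have h1 := ((hα.sub_const (Real.sqrt (2*t))).abs).mul_const W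
      simpa using h1.add hd
    set P : ℕ → ℝ := fun n => (∑ j ∈ Finset.range n,
        c (((n : ℝ) - j) * t / n)
          (Real.sqrt ((n : ℝ) * Real.sinh (2 * t / n)) * w ((j : ℝ) / n) +
            x / Real.cosh (2 * t / n) ^ j)) / n with hPdef
    set R : ℕ → ℝ := fun n => (∑ j ∈ Finset.range n,
        c (t * (1 - (j:ℝ)/n)) (Real.sqrt (2*t) * w ((j:ℝ)/n) + x)) / n with hRdef
    have key : Tendsto (fun n => P n - R n) atTop (𝓝 0) := by
      rw [NormedAddCommGroup.tendsto_nhds_zero]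
      intro ε hε
      have hKc : IsCompact ((Set.Icc (0:ℝ) t) ×ˢ
          (Set.Icc (-((Real.sqrt (2*t) + 1) * W + |x|)) ((Real.sqrt (2*t) + 1) * W + |x|))) :=
        isCompact_Icc.prod isCompact_Icc
      have hKsub : ((Set.Icc (0:ℝ) t) ×ˢ
          (Set.Icc (-((Real.sqrt (2*t) + 1) * W + |x|)) ((Real.sqrt (2*t) + 1) * W + |x|)))
          ⊆ Set.Ici 0 ×ˢ Set.univ := fun p hp => ⟨hp.1.1, trivial⟩
      have huc := hKc.uniformContinuousOn_of_continuous (hc_cont.mono hKsub)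
      rw [Metric.uniformContinuousOn_iff] at huc
      obtain ⟨δ, hδ, hδc⟩ := huc (ε/2) (by positivity)
      have ev1 : ∀ᶠ n : ℕ in atTop,
          |Real.sqrt ((n:ℝ) * Real.sinh (2*t/n)) - Real.sqrt (2*t)| < 1 := by
        have h1 := (hα.sub_const (Real.sqrt (2*t))).abs
        rw [sub_self, abs_zero] at h1
        exact h1.eventually_lt_const one_pos
      have ev2 : ∀ᶠ n : ℕ in atTop,
          |Real.sqrt ((n:ℝ) * Real.sinh (2*t/n)) - Real.sqrt (2*t)| * W
            + |x| * (1 - Real.exp (-(2*t^2)/n)) < δ := hE.eventually_lt_const hδ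
      filter_upwards [ev1, ev2, eventually_ge_atTop 1] with n h1 h2 hn1
      have hnpos : (0:ℝ) < n := by exact_mod_cast hn1
      have hA0 : 0 ≤ Real.sqrt ((n:ℝ) * Real.sinh (2*t/n)) := Real.sqrt_nonneg _
      have hAle : Real.sqrt ((n:ℝ) * Real.sinh (2*t/n)) ≤ Real.sqrt (2*t) + 1 := by
        have := abs_lt.mp h1; linarith
      have hpt : ∀ j ∈ Finset.range n,
          |c (((n : ℝ) - j) * t / n)
            (Real.sqrt ((n : ℝ) * Real.sinh (2 * t / n)) * w ((j : ℝ) / n) +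
              x / Real.cosh (2 * t / n) ^ j)
            - c (t * (1 - (j:ℝ)/n)) (Real.sqrt (2*t) * w ((j:ℝ)/n) + x)| ≤ ε/2 := by
        intro j hj
        have hj' : j < n := Finset.mem_range.mp hj
        have hjr : (j:ℝ) < n := by exact_mod_cast hj'
        have hjn : (j:ℝ)/n ∈ Set.Icc (0:ℝ) 1 :=
          ⟨by positivity, by rw [div_le_one hnpos]; exact hjr.le⟩
        have hwj : |w ((j:ℝ)/n)| ≤ W := hWs _ hjn
        have hfst : ((n:ℝ) - j) * t / n = t * (1 - (j:ℝ)/n) := by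
          field_simp
        have hch1 : (1:ℝ) ≤ Real.cosh (2*t/n) ^ j :=
          one_le_pow₀ (Real.one_le_cosh _)
        have hchn : Real.cosh (2*t/n) ^ j ≤ Real.exp ((2*t^2)/n) := by
          calc Real.cosh (2*t/n) ^ j ≤ Real.cosh (2*t/n) ^ n :=
                pow_le_pow_right₀ (Real.one_le_cosh _) hj'.le
            _ ≤ (Real.exp ((2*t/n)^2/2)) ^ n :=
                pow_le_pow_left₀ (Real.cosh_pos _).le (Real.cosh_le_exp_half_sq _) n
            _ = Real.exp ((n:ℝ) * ((2*t/n)^2/2)) := by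
                rw [← Real.exp_nat_mul]
            _ = Real.exp ((2*t^2)/n) := by
                congr 1; field_simp
        have hCpos : (0:ℝ) < Real.cosh (2*t/n) ^ j := by positivity
        have h1C : Real.exp (-(2*t^2)/n) ≤ 1 / Real.cosh (2*t/n) ^ j := by
          rw [neg_div, Real.exp_neg, ← one_div]
          exact one_div_le_one_div_of_le hCpos hchn
        have h1C' : 1 / Real.cosh (2*t/n) ^ j ≤ 1 := by
          rw [div_le_one hCpos]; exact hch1
        have hxdiff : |x / Real.cosh (2*t/n) ^ j - x| ≤ |x| * (1 - Real.exp (-(2*t^2)/n)) := by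
          have heq : x / Real.cosh (2*t/n) ^ j - x
              = -(x * (1 - 1 / Real.cosh (2*t/n) ^ j)) := by
            ring
          rw [heq, abs_neg, abs_mul,
            abs_of_nonneg (by linarith : (0:ℝ) ≤ 1 - 1 / Real.cosh (2*t/n) ^ j)]
          have : 1 - 1 / Real.cosh (2*t/n) ^ j ≤ 1 - Real.exp (-(2*t^2)/n) := by linarith
          exact mul_le_mul_of_nonneg_left this (abs_nonneg x)
        -- membership of the two points
        have hfst_mem : t * (1 - (j:ℝ)/n) ∈ Set.Icc (0:ℝ) t := by
          constructor
          · nlinarith [hjn.2]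
          · nlinarith [hjn.1]
        have hpK : (t * (1 - (j:ℝ)/n),
            Real.sqrt ((n : ℝ) * Real.sinh (2 * t / n)) * w ((j : ℝ) / n) +
              x / Real.cosh (2 * t / n) ^ j) ∈
            ((Set.Icc (0:ℝ) t) ×ˢ
              (Set.Icc (-((Real.sqrt (2*t) + 1) * W + |x|)) ((Real.sqrt (2*t) + 1) * W + |x|))) := by
          refine ⟨hfst_mem, ?_⟩
          rw [Set.mem_Icc, ← abs_le]
          have ha1 : |Real.sqrt ((n : ℝ) * Real.sinh (2 * t / n)) * w ((j : ℝ) / n)|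
              ≤ (Real.sqrt (2*t) + 1) * W := by
            rw [abs_mul, abs_of_nonneg hA0]
            exact mul_le_mul hAle hwj (abs_nonneg _) (by positivity)
          have ha2 : |x / Real.cosh (2*t/n) ^ j| ≤ |x| := by
            rw [abs_div, abs_of_pos hCpos]
            exact div_le_self (abs_nonneg x) hch1
          calc |_ + _| ≤ _ + _ := abs_add_le _ _
            _ ≤ (Real.sqrt (2*t) + 1) * W + |x| := add_le_add ha1 ha2
        have hqK : (t * (1 - (j:ℝ)/n), Real.sqrt (2*t) * w ((j:ℝ)/n) + x) ∈
            ((Set.Icc (0:ℝ) t) ×ˢ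
              (Set.Icc (-((Real.sqrt (2*t) + 1) * W + |x|)) ((Real.sqrt (2*t) + 1) * W + |x|))) := by
          refine ⟨hfst_mem, ?_⟩
          rw [Set.mem_Icc, ← abs_le]
          have ha1 : |Real.sqrt (2*t) * w ((j:ℝ)/n)| ≤ (Real.sqrt (2*t) + 1) * W := by
            rw [abs_mul, abs_of_nonneg (Real.sqrt_nonneg _)]
            exact mul_le_mul (by linarith [Real.sqrt_nonneg (2*t)]) hwj (abs_nonneg _)
              (by positivity)
          calc |_ + _| ≤ _ + _ := abs_add_le _ _
            _ ≤ (Real.sqrt (2*t) + 1) * W + |x| := add_le_add ha1 le_rfl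
        have hdist : dist
            ((t * (1 - (j:ℝ)/n),
              Real.sqrt ((n : ℝ) * Real.sinh (2 * t / n)) * w ((j : ℝ) / n) +
                x / Real.cosh (2 * t / n) ^ j) : ℝ × ℝ)
            ((t * (1 - (j:ℝ)/n), Real.sqrt (2*t) * w ((j:ℝ)/n) + x) : ℝ × ℝ) < δ := by
          rw [Prod.dist_eq]
          simp only [dist_self]
          rw [max_eq_right dist_nonneg, Real.dist_eq]
          have heq : Real.sqrt ((n : ℝ) * Real.sinh (2 * t / n)) * w ((j : ℝ) / n) +
                x / Real.cosh (2 * t / n) ^ j - (Real.sqrt (2*t) * w ((j:ℝ)/n) + x)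
              = (Real.sqrt ((n : ℝ) * Real.sinh (2 * t / n)) - Real.sqrt (2*t)) * w ((j:ℝ)/n)
                + (x / Real.cosh (2*t/n) ^ j - x) := by ring
          rw [heq]
          calc |(Real.sqrt ((n : ℝ) * Real.sinh (2 * t / n)) - Real.sqrt (2*t)) * w ((j:ℝ)/n)
                + (x / Real.cosh (2*t/n) ^ j - x)|
              ≤ |(Real.sqrt ((n : ℝ) * Real.sinh (2 * t / n)) - Real.sqrt (2*t)) * w ((j:ℝ)/n)|
                + |x / Real.cosh (2*t/n) ^ j - x| := abs_add_le _ _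
            _ ≤ |Real.sqrt ((n : ℝ) * Real.sinh (2 * t / n)) - Real.sqrt (2*t)| * W
                + |x| * (1 - Real.exp (-(2*t^2)/n)) := by
                rw [abs_mul]
                exact add_le_add (mul_le_mul_of_nonneg_left hwj (abs_nonneg _)) hxdiff
            _ < δ := h2
        have := hδc _ hpK _ hqK hdist
        rw [Real.dist_eq] at this
        rw [hfst]
        exact this.le
      -- assemble
      rw [Real.norm_eq_abs]
      have h0 : P n - R n = (∑ j ∈ Finset.range n,
          (c (((n : ℝ) - j) * t / n)
            (Real.sqrt ((n : ℝ) * Real.sinh (2 * t / n)) * w ((j : ℝ) / n) +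
              x / Real.cosh (2 * t / n) ^ j)
            - c (t * (1 - (j:ℝ)/n)) (Real.sqrt (2*t) * w ((j:ℝ)/n) + x))) / n := by
        rw [hPdef, hRdef]
        simp only []
        rw [Finset.sum_sub_distrib, sub_div]
      rw [h0, abs_div, abs_of_pos hnpos]
      have hs1 : |∑ j ∈ Finset.range n,
          (c (((n : ℝ) - j) * t / n)
            (Real.sqrt ((n : ℝ) * Real.sinh (2 * t / n)) * w ((j : ℝ) / n) +
              x / Real.cosh (2 * t / n) ^ j)
            - c (t * (1 - (j:ℝ)/n)) (Real.sqrt (2*t) * w ((j:ℝ)/n) + x))|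
          ≤ (n:ℝ) * (ε/2) := by
        calc |∑ j ∈ Finset.range n, _| ≤ ∑ j ∈ Finset.range n,
            |c (((n : ℝ) - j) * t / n)
              (Real.sqrt ((n : ℝ) * Real.sinh (2 * t / n)) * w ((j : ℝ) / n) +
                x / Real.cosh (2 * t / n) ^ j)
              - c (t * (1 - (j:ℝ)/n)) (Real.sqrt (2*t) * w ((j:ℝ)/n) + x)| :=
            Finset.abs_sum_le_sum_abs _ _
          _ ≤ ∑ _j ∈ Finset.range n, ε/2 := Finset.sum_le_sum hpt
          _ = (n:ℝ) * (ε/2) := by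
              rw [Finset.sum_const, Finset.card_range, nsmul_eq_mul]
      calc _ ≤ ((n:ℝ) * (ε/2)) / n := by
            exact div_le_div_of_nonneg_right hs1 hnpos.le
        _ = ε/2 := by field_simp
        _ < ε := by linarith
    have hP : Tendsto P atTop (𝓝 (∫ s in (0:ℝ)..1,
        c (t * (1 - s)) (Real.sqrt (2*t) * w s + x))) := by
      have := key.add hR
      simpa using this
    have hfinal := (Real.continuous_exp.tendsto _).comp ((hP.const_mul t).neg)
    have hHP : ∀ n, H n = Real.exp (-(t * P n)) := by
      intro n
      rw [hH, hPdef]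
      simp only []
      congr 1
      ring
    refine Tendsto.congr (fun n => (hHP n).symm) ?_
    exact hfinal
end

section
/- Let v_0 be continuous and bounded on ℝ with v_0(x) → 0 as |x| → ∞, and let c be continuous and bounded on [0,∞)×ℝ, C¹ on (0,∞)×ℝ, with bounded continuous space derivatives up to order 4 on (0,∞)×ℝ. Then for all sufficiently small t > 0 (in particular 2t ≤ 1) and all x ∈ ℝ, the function v of the Feynman–Kac formula satisfies v(t,x) = ∫_{C_W} v_0(w(2t) + x) · exp(−(1/2) ∫₀^{2t} (x + w(s))² ds) · exp(−(1/2) ∫₀^{2t} c(t − s/2, w(s) + x) ds) dm_W(w). -/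
open MeasureTheory Real Filter Topology

noncomputable section


/-- The classical Wiener space: continuous functions on `[0,1]` vanishing at `0`. -/
def CW : Type := {w : C(Set.Icc (0:ℝ) 1, ℝ) // w ⟨0, by norm_num⟩ = 0}

instance : TopologicalSpace CW := by unfold CW; infer_instance
instance : MeasurableSpace CW := borel CW

/-- Evaluation of an element of the Wiener space at a time `s` (clamped to `[0,1]`). -/
def CW.eval (w : CW) (s : ℝ) : ℝ := w.1 (Set.projIcc (0:ℝ) 1 zero_le_one s)

/-- The value preceding index `i`, with the convention that it is `0` for `i = 0`. -/
def prevVal {n : ℕ} (v : Fin n → ℝ) (i : Fin n) : ℝ :=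
  if h : (i : ℕ) = 0 then 0 else v ⟨(i : ℕ) - 1, by have := i.isLt; omega⟩

/-- The normal (Gaussian) density of the finite-dimensional distributions of Brownian
motion at times `t 0 < t 1 < ⋯ < t (n-1)`. -/
def normalDensity {n : ℕ} (t : Fin n → ℝ) (ξ : Fin n → ℝ) : ℝ :=
  (Real.sqrt ((2 * π) ^ n * ∏ i, (t i - prevVal t i)))⁻¹ *
    Real.exp (-(1 / 2) * ∑ i, (ξ i - prevVal ξ i) ^ 2 / (t i - prevVal t i))

/-- `μ` is the Wiener measure: a probability measure on `CW` whose finite-dimensional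
distributions at times `0 < t 0 < t 1 < ⋯ < t (n-1) ≤ 1` have the normal density. -/
structure IsWienerMeasure (μ : Measure CW) : Prop where
  prob : IsProbabilityMeasure μ
  fdd : ∀ (n : ℕ) (t : Fin n → ℝ), StrictMono t → (∀ i, 0 < t i) → (∀ i, t i ≤ 1) →
    Measure.map (fun (w : CW) (i : Fin n) => w.eval (t i)) μ =
      MeasureTheory.volume.withDensity (fun ξ => ENNReal.ofReal (normalDensity t ξ))

/-- The Feynman–Kac type integral of the paper:
`S(v₀,c)(t,x) = ∫_{C_W} v₀(√(2t) w(1)+x) exp(−t∫₀¹ (x+√(2t)w(s))² ds)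
  exp(−t∫₀¹ c(t(1−s), √(2t)w(s)+x) ds) dm_W(w)`. -/
def wienerFK (μ : Measure CW) (v₀ : ℝ → ℝ) (c : ℝ → ℝ → ℝ) (t x : ℝ) : ℝ :=
  ∫ w : CW,
    v₀ (Real.sqrt (2 * t) * w.eval 1 + x) *
      Real.exp (-(t * ∫ s in (0:ℝ)..1, (x + Real.sqrt (2 * t) * w.eval s) ^ 2)) *
      Real.exp (-(t * ∫ s in (0:ℝ)..1,
        c (t * (1 - s)) (Real.sqrt (2 * t) * w.eval s + x))) ∂μ

open scoped NNReal ENNReal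

instance : BorelSpace CW := ⟨rfl⟩

lemma CW.continuous_eval (s : ℝ) : Continuous fun w : CW => w.eval s := by
  unfold CW.eval
  exact (continuous_id.eval_const _).comp continuous_subtype_val

lemma measurable_evalVec {n : ℕ} (σ : Fin n → ℝ) :
    Measurable fun (w : CW) (i : Fin n) => w.eval (σ i) :=
  measurable_pi_lambda _ fun i => (CW.continuous_eval (σ i)).measurable

lemma prevVal_mul_left {n : ℕ} (a : ℝ) (v : Fin n → ℝ) (i : Fin n) :
    prevVal (fun j => a * v j) i = a * prevVal v i := by
  unfold prevVal
  by_cases h : (i : ℕ) = 0 <;> simp [h]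

lemma prevVal_smul {n : ℕ} (a : ℝ) (v : Fin n → ℝ) (i : Fin n) :
    prevVal (a • v) i = a * prevVal v i := by
  have h : a • v = fun j => a * v j := rfl
  rw [h, prevVal_mul_left]

lemma sub_prevVal_pos {n : ℕ} {τ : Fin n → ℝ} (hmono : StrictMono τ) (hpos : ∀ i, 0 < τ i)
    (i : Fin n) : 0 < τ i - prevVal τ i := by
  by_cases h : (i : ℕ) = 0
  · simpa [prevVal, h] using hpos i
  · have hlt : (⟨(i:ℕ)-1, by have := i.isLt; omega⟩ : Fin n) < i := by
      simp only [Fin.lt_def]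
      omega
    simp only [prevVal, dif_neg h, sub_pos]
    exact hmono hlt

lemma normalDensity_nonneg {n : ℕ} (τ ξ : Fin n → ℝ) : 0 ≤ normalDensity τ ξ := by
  unfold normalDensity
  positivity

lemma continuous_normalDensity {n : ℕ} (τ : Fin n → ℝ) : Continuous (normalDensity τ) := by
  unfold normalDensity
  refine continuous_const.mul (Real.continuous_exp.comp (continuous_const.mul ?_))
  refine continuous_finset_sum _ fun i _ => Continuous.div_const ?_ _
  have hprev : Continuous fun ξ : Fin n → ℝ => prevVal ξ i := by
    unfold prevVal
    by_cases h : (i : ℕ) = 0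
    · simp only [dif_pos h]; exact continuous_const
    · simp only [dif_neg h]; exact continuous_apply _
  exact ((continuous_apply i).sub hprev).pow 2

lemma sqrt_pow' {a : ℝ} (ha : 0 ≤ a) (n : ℕ) : Real.sqrt (a ^ n) = Real.sqrt a ^ n := by
  induction n with
  | zero => simp
  | succ k ih => rw [pow_succ, pow_succ, Real.sqrt_mul (pow_nonneg ha k), ih]

lemma normalDensity_smul {n : ℕ} {τ : Fin n → ℝ} (hτ : ∀ i, 0 < τ i - prevVal τ i)
    {a : ℝ} (ha : 0 < a) (ξ : Fin n → ℝ) :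
    normalDensity (fun i => a * τ i) (Real.sqrt a • ξ) =
      (Real.sqrt a ^ n)⁻¹ * normalDensity τ ξ := by
  have hP : 0 < ∏ i, (τ i - prevVal τ i) := Finset.prod_pos fun i _ => hτ i
  unfold normalDensity
  have key1 : ∀ i : Fin n, ((Real.sqrt a • ξ) i - prevVal (Real.sqrt a • ξ) i) ^ 2 /
      (a * τ i - prevVal (fun j => a * τ j) i)
      = (ξ i - prevVal ξ i) ^ 2 / (τ i - prevVal τ i) := by
    intro i
    rw [prevVal_smul, prevVal_mul_left]
    have h1 : (Real.sqrt a • ξ) i = Real.sqrt a * ξ i := rfl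
    rw [h1, ← mul_sub, ← mul_sub, mul_pow, Real.sq_sqrt ha.le,
      mul_div_mul_left _ _ (ne_of_gt ha)]
  have key2 : ∏ i : Fin n, (a * τ i - prevVal (fun j => a * τ j) i)
      = a ^ n * ∏ i, (τ i - prevVal τ i) := by
    calc ∏ i : Fin n, (a * τ i - prevVal (fun j => a * τ j) i)
        = ∏ i : Fin n, a * (τ i - prevVal τ i) :=
          Finset.prod_congr rfl fun i _ => by rw [prevVal_mul_left, mul_sub]
      _ = (∏ _i : Fin n, a) * ∏ i, (τ i - prevVal τ i) := Finset.prod_mul_distrib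
      _ = a ^ n * ∏ i, (τ i - prevVal τ i) := by
          rw [Finset.prod_const, Finset.card_univ, Fintype.card_fin]
  simp only []
  rw [Finset.sum_congr rfl fun i _ => key1 i, key2,
    show (2 * π) ^ n * (a ^ n * ∏ i, (τ i - prevVal τ i))
      = a ^ n * ((2 * π) ^ n * ∏ i, (τ i - prevVal τ i)) by ring,
    Real.sqrt_mul (by positivity) , sqrt_pow' ha.le, mul_inv, mul_assoc]

lemma cylinder_scale (μ : Measure CW) (hμ : IsWienerMeasure μ) {n : ℕ} (τ : Fin n → ℝ)
    (hmono : StrictMono τ) (hpos : ∀ i, 0 < τ i) (hle : ∀ i, τ i ≤ 1)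
    {a : ℝ} (ha : 0 < a) (haτ : ∀ i, a * τ i ≤ 1)
    (Φ : (Fin n → ℝ) → ℝ) (hΦ : Continuous Φ) :
    ∫ w : CW, Φ (fun i => w.eval (τ i)) ∂μ
      = ∫ w : CW, Φ (fun i => (Real.sqrt a)⁻¹ * w.eval (a * τ i)) ∂μ := by
  have hS : (0:ℝ) < Real.sqrt a := Real.sqrt_pos.mpr ha
  have hfdd1 := hμ.fdd n τ hmono hpos hle
  have hfdd2 := hμ.fdd n (fun i => a * τ i)
    (fun i j hij => by exact mul_lt_mul_of_pos_left (hmono hij) ha)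
    (fun i => mul_pos ha (hpos i)) haτ
  have hint : ∀ (σ : Fin n → ℝ) (Ψ : (Fin n → ℝ) → ℝ), Continuous Ψ →
      StrictMono σ → (∀ i, 0 < σ i) → (∀ i, σ i ≤ 1) →
      ∫ w : CW, Ψ (fun i => w.eval (σ i)) ∂μ = ∫ ξ, normalDensity σ ξ * Ψ ξ := by
    intro σ Ψ hΨ hm hp hl
    rw [← integral_map (measurable_evalVec σ).aemeasurable hΨ.aestronglyMeasurable,
      hμ.fdd n σ hm hp hl]
    rw [show (fun ξ => ENNReal.ofReal (normalDensity σ ξ)) = fun ξ => (((fun ξ => (normalDensity σ ξ).toNNReal) ξ : ℝ≥0) : ℝ≥0∞) from rfl]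
    rw [integral_withDensity_eq_integral_smul
      ((continuous_normalDensity σ).measurable.real_toNNReal) Ψ]
    congr 1
    ext ξ
    rw [NNReal.smul_def, Real.coe_toNNReal _ (normalDensity_nonneg σ ξ), smul_eq_mul]
  rw [hint τ Φ hΦ hmono hpos hle]
  have hΦ' : Continuous fun ξ : Fin n → ℝ => Φ ((Real.sqrt a)⁻¹ • ξ) :=
    hΦ.comp (continuous_const_smul _)
  have h2 : ∫ w : CW, Φ (fun i => (Real.sqrt a)⁻¹ * w.eval (a * τ i)) ∂μ
      = ∫ ξ, normalDensity (fun i => a * τ i) ξ * Φ ((Real.sqrt a)⁻¹ • ξ) := by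
    have := hint (fun i => a * τ i) (fun ξ => Φ ((Real.sqrt a)⁻¹ • ξ)) hΦ'
      (fun i j hij => by exact mul_lt_mul_of_pos_left (hmono hij) ha)
      (fun i => mul_pos ha (hpos i)) haτ
    rw [← this]
    rfl
  rw [h2]
  -- change of variables ξ = √a • η
  have hcs := MeasureTheory.Measure.integral_comp_smul (volume : Measure (Fin n → ℝ))
    (fun ξ => normalDensity (fun i => a * τ i) ξ * Φ ((Real.sqrt a)⁻¹ • ξ)) (Real.sqrt a)
  rw [Module.finrank_pi, Fintype.card_fin] at hcs
  have hsimp : (fun η : Fin n → ℝ => normalDensity (fun i => a * τ i) (Real.sqrt a • η) *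
      Φ ((Real.sqrt a)⁻¹ • Real.sqrt a • η))
      = fun η => (Real.sqrt a ^ n)⁻¹ * (normalDensity τ η * Φ η) := by
    funext η
    rw [inv_smul_smul₀ (ne_of_gt hS),
      normalDensity_smul (sub_prevVal_pos hmono hpos) ha, mul_assoc]
  rw [hsimp] at hcs
  rw [integral_const_mul] at hcs
  have habs : |(Real.sqrt a ^ n)⁻¹| = (Real.sqrt a ^ n)⁻¹ := abs_of_pos (by positivity)
  rw [habs, smul_eq_mul] at hcs
  exact mul_left_cancel₀ (a := (Real.sqrt a ^ n)⁻¹) (by positivity) hcs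
lemma tendsto_riemannSum {g : ℝ → ℝ} (hg : ContinuousOn g (Set.Icc 0 1)) :
    Tendsto (fun n : ℕ => (∑ j : Fin (n+1), g ((((j:ℕ):ℝ) + 1) / ((n:ℝ) + 1))) / ((n:ℝ) + 1))
      atTop (𝓝 (∫ s in (0:ℝ)..1, g s)) := by
  rw [Metric.tendsto_atTop]
  intro ε hε
  obtain ⟨δ, hδ, hmod⟩ := Metric.uniformContinuousOn_iff.mp
    (isCompact_Icc.uniformContinuousOn_of_continuous hg) (ε/2) (by linarith)
  obtain ⟨N, hN⟩ : ∃ N : ℕ, 1/((N:ℝ)+1) < δ := by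
    obtain ⟨N, hN⟩ := exists_nat_gt (1/δ)
    refine ⟨N, ?_⟩
    rw [div_lt_iff₀ (by positivity)]
    rw [div_lt_iff₀ hδ] at hN
    nlinarith
  refine ⟨N, fun n hn => ?_⟩
  have hm : (0:ℝ) < (n:ℝ) + 1 := by positivity
  set m : ℝ := (n:ℝ) + 1 with hmdef
  set a : ℕ → ℝ := fun k => (k:ℝ)/m with hadef
  have hstep : ∀ k : ℕ, a (k+1) - a k = 1/m := by
    intro k; simp only [hadef]; push_cast; field_simp; ring
  have hlt : ∀ k : ℕ, a k < a (k+1) := by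
    intro k
    have := hstep k
    have h1m : (0:ℝ) < 1/m := by positivity
    linarith
  have hsub : ∀ k : ℕ, k < n+1 → Set.Icc (a k) (a (k+1)) ⊆ Set.Icc 0 1 := by
    intro k hk s hs
    have h0 : 0 ≤ a k := div_nonneg (Nat.cast_nonneg k) hm.le
    have h1 : a (k+1) ≤ 1 := by
      rw [hadef, div_le_one hm]
      push_cast
      have hk' : (k:ℝ) ≤ (n:ℝ) := by exact_mod_cast Nat.lt_succ_iff.mp hk
      rw [hmdef]
      linarith
    exact ⟨h0.trans hs.1, hs.2.trans h1⟩
  have hint : ∀ k < n+1, IntervalIntegrable g volume (a k) (a (k+1)) := by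
    intro k hk
    apply ContinuousOn.intervalIntegrable
    apply hg.mono
    rw [Set.uIcc_of_le (hlt k).le]
    exact hsub k hk
  have h0 : a 0 = 0 := by simp [hadef]
  have h1 : a (n+1) = 1 := by
    rw [hadef]
    push_cast
    exact div_self (ne_of_gt hm)
  have hsplit : ∫ s in (0:ℝ)..1, g s = ∑ k ∈ Finset.range (n+1), ∫ s in a k..a (k+1), g s := by
    have := intervalIntegral.sum_integral_adjacent_intervals hint
    rw [h0, h1] at this
    exact this.symm
  have hsum : (∑ j : Fin (n+1), g ((((j:ℕ):ℝ) + 1) / m)) / m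
      = ∑ k ∈ Finset.range (n+1), ∫ _s in a k..a (k+1), g (a (k+1)) := by
    rw [Fin.sum_univ_eq_sum_range (fun j => g (((j:ℝ) + 1) / m)), Finset.sum_div]
    refine Finset.sum_congr rfl fun k _ => ?_
    rw [intervalIntegral.integral_const, hstep k, smul_eq_mul]
    have : ((k:ℝ) + 1)/m = a (k+1) := by rw [hadef]; push_cast; ring_nf
    rw [this]
    ring
  rw [Real.dist_eq, hsum, hsplit, ← Finset.sum_sub_distrib]
  have hbound : ∀ k ∈ Finset.range (n+1),
      |(∫ _s in a k..a (k+1), g (a (k+1))) - ∫ s in a k..a (k+1), g s| ≤ ε/2 * (1/m) := by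
    intro k hk
    rw [Finset.mem_range] at hk
    rw [← intervalIntegral.integral_sub intervalIntegrable_const (hint k hk)]
    have hb := intervalIntegral.norm_integral_le_of_norm_le_const
      (C := ε/2) (f := fun s => g (a (k+1)) - g s) (a := a k) (b := a (k+1)) ?_
    · rw [Real.norm_eq_abs] at hb
      calc |∫ s in a k..a (k+1), (g (a (k+1)) - g s)| ≤ ε/2 * |a (k+1) - a k| := hb
        _ = ε/2 * (1/m) := by rw [hstep k, abs_of_pos (by positivity)]
    · intro s hs
      rw [Set.uIoc_of_le (hlt k).le] at hs
      have hsIcc : s ∈ Set.Icc (a k) (a (k+1)) := ⟨hs.1.le, hs.2⟩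
      have hs01 : s ∈ Set.Icc (0:ℝ) 1 := hsub k hk hsIcc
      have hc01 : a (k+1) ∈ Set.Icc (0:ℝ) 1 := hsub k hk ⟨(hlt k).le, le_refl _⟩
      have hdist : dist (a (k+1)) s < δ := by
        rw [Real.dist_eq, abs_of_nonneg (by linarith [hs.2])]
        have h1' : a (k+1) - s < 1/m := by have := hstep k; linarith [hs.1]
        have h2' : (1:ℝ)/m ≤ 1/((N:ℝ)+1) := by
          apply one_div_le_one_div_of_le (by positivity)
          rw [hmdef]
          have : (N:ℝ) ≤ (n:ℝ) := by exact_mod_cast hn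
          linarith
        linarith
      rw [Real.norm_eq_abs, ← Real.dist_eq]
      exact (hmod _ hc01 _ hs01 hdist).le
  calc |∑ k ∈ Finset.range (n+1), ((∫ _s in a k..a (k+1), g (a (k+1))) - ∫ s in a k..a (k+1), g s)|
      ≤ ∑ k ∈ Finset.range (n+1), |(∫ _s in a k..a (k+1), g (a (k+1))) - ∫ s in a k..a (k+1), g s| :=
        Finset.abs_sum_le_sum_abs _ _
    _ ≤ ∑ _k ∈ Finset.range (n+1), ε/2 * (1/m) := Finset.sum_le_sum hbound
    _ = (n+1) * (ε/2 * (1/m)) := by rw [Finset.sum_const, Finset.card_range]; push_cast; ring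
    _ < ε := by
        rw [hmdef]
        have : ((n:ℝ)+1) * (ε/2 * (1/((n:ℝ)+1))) = ε/2 := by field_simp
        rw [this]
        linarith
lemma continuous_slice {c : ℝ → ℝ → ℝ}
    (hc : ContinuousOn (fun p : ℝ × ℝ => c p.1 p.2) (Set.Ici 0 ×ˢ Set.univ))
    {a : ℝ} (ha : 0 ≤ a) : Continuous fun y : ℝ => c a y := by
  rw [← continuousOn_univ]
  exact hc.comp ((continuous_const.prodMk continuous_id).continuousOn)
    (fun y _ => ⟨ha, trivial⟩)

lemma CW.continuous_eval' (w : CW) : Continuous w.eval := by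
  unfold CW.eval
  exact (map_continuous w.1).comp (continuous_projIcc)

/-- The cylinder approximation of the Feynman–Kac integrand. -/
def phiFK (v₀ : ℝ → ℝ) (c : ℝ → ℝ → ℝ) (t x R : ℝ) (n : ℕ) (ξ : Fin (n+1) → ℝ) : ℝ :=
  v₀ (R * ξ (Fin.last n) + x) *
    Real.exp (-(t * ((∑ j : Fin (n+1), (x + R * ξ j) ^ 2) / ((n:ℝ) + 1)))) *
    Real.exp (-(t * ((∑ j : Fin (n+1),
      c (t * (1 - (((j:ℕ):ℝ) + 1) / ((n:ℝ) + 1))) (R * ξ j + x)) / ((n:ℝ) + 1))))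

lemma phiFK_cont {v₀ : ℝ → ℝ} {c : ℝ → ℝ → ℝ} {t x R : ℝ} (hv₀c : Continuous v₀)
    (hc : ContinuousOn (fun p : ℝ × ℝ => c p.1 p.2) (Set.Ici 0 ×ˢ Set.univ))
    (ht : 0 < t) (n : ℕ) : Continuous (phiFK v₀ c t x R n) := by
  unfold phiFK
  have h1 : Continuous fun ξ : Fin (n+1) → ℝ => v₀ (R * ξ (Fin.last n) + x) :=
    hv₀c.comp ((continuous_const.mul (continuous_apply (Fin.last n))).add continuous_const)
  have h2 : Continuous fun ξ : Fin (n+1) → ℝ =>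
      Real.exp (-(t * ((∑ j : Fin (n+1), (x + R * ξ j) ^ 2) / ((n:ℝ) + 1)))) := by
    refine Real.continuous_exp.comp (Continuous.neg (Continuous.mul continuous_const ?_))
    refine Continuous.div_const ?_ _
    exact continuous_finset_sum _ fun j _ =>
      ((continuous_const.add (continuous_const.mul (continuous_apply j))).pow 2)
  have h3 : Continuous fun ξ : Fin (n+1) → ℝ =>
      Real.exp (-(t * ((∑ j : Fin (n+1),
        c (t * (1 - (((j:ℕ):ℝ) + 1) / ((n:ℝ) + 1))) (R * ξ j + x)) / ((n:ℝ) + 1)))) := by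
    refine Real.continuous_exp.comp (Continuous.neg (Continuous.mul continuous_const ?_))
    refine Continuous.div_const ?_ _
    refine continuous_finset_sum _ fun j _ => ?_
    have hτj : (0:ℝ) ≤ t * (1 - (((j:ℕ):ℝ) + 1) / ((n:ℝ) + 1)) := by
      have hj1 : (((j:ℕ):ℝ) + 1) / ((n:ℝ) + 1) ≤ 1 := by
        rw [div_le_one (by positivity)]
        have : ((j:ℕ):ℝ) ≤ (n:ℝ) := by exact_mod_cast Nat.lt_succ_iff.mp j.isLt
        linarith
      have : (0:ℝ) ≤ 1 - (((j:ℕ):ℝ) + 1) / ((n:ℝ) + 1) := by linarith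
      positivity
    exact (continuous_slice hc hτj).comp
      ((continuous_const.mul (continuous_apply j)).add continuous_const)
  exact (h1.mul h2).mul h3

lemma phiFK_bound {v₀ : ℝ → ℝ} {c : ℝ → ℝ → ℝ} {t x R : ℝ} {Mv Mc : ℝ}
    (hMv : ∀ y : ℝ, |v₀ y| ≤ Mv) (hMc : ∀ s ∈ Set.Ici (0:ℝ), ∀ y : ℝ, |c s y| ≤ Mc)
    (ht : 0 < t) (n : ℕ) (ξ : Fin (n+1) → ℝ) :
    |phiFK v₀ c t x R n ξ| ≤ Mv * Real.exp (t * Mc) := by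
  have hMc0 : 0 ≤ Mc := (abs_nonneg _).trans (hMc 0 (Set.mem_Ici.mpr le_rfl) 0)
  unfold phiFK
  rw [abs_mul, abs_mul, Real.abs_exp, Real.abs_exp]
  have he1 : Real.exp (-(t * ((∑ j : Fin (n+1), (x + R * ξ j) ^ 2) / ((n:ℝ) + 1)))) ≤ 1 := by
    rw [Real.exp_le_one_iff]
    have hsq : (0:ℝ) ≤ (∑ j : Fin (n+1), (x + R * ξ j) ^ 2) / ((n:ℝ) + 1) := by positivity
    nlinarith
  have he2 : Real.exp (-(t * ((∑ j : Fin (n+1),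
      c (t * (1 - (((j:ℕ):ℝ) + 1) / ((n:ℝ) + 1))) (R * ξ j + x)) / ((n:ℝ) + 1)))) ≤
      Real.exp (t * Mc) := by
    rw [Real.exp_le_exp]
    have hsum : |∑ j : Fin (n+1),
        c (t * (1 - (((j:ℕ):ℝ) + 1) / ((n:ℝ) + 1))) (R * ξ j + x)| ≤ ((n:ℝ) + 1) * Mc := by
      calc |∑ j : Fin (n+1), c (t * (1 - (((j:ℕ):ℝ) + 1) / ((n:ℝ) + 1))) (R * ξ j + x)|
          ≤ ∑ j : Fin (n+1), |c (t * (1 - (((j:ℕ):ℝ) + 1) / ((n:ℝ) + 1))) (R * ξ j + x)| :=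
            Finset.abs_sum_le_sum_abs _ _
        _ ≤ ∑ _j : Fin (n+1), Mc := by
            refine Finset.sum_le_sum fun j _ => hMc _ ?_ _
            have hj1 : (((j:ℕ):ℝ) + 1) / ((n:ℝ) + 1) ≤ 1 := by
              rw [div_le_one (by positivity)]
              have : ((j:ℕ):ℝ) ≤ (n:ℝ) := by exact_mod_cast Nat.lt_succ_iff.mp j.isLt
              linarith
            have h0 : (0:ℝ) ≤ 1 - (((j:ℕ):ℝ) + 1) / ((n:ℝ) + 1) := by linarith
            exact mul_nonneg ht.le h0
        _ = ((n:ℝ) + 1) * Mc := by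
            rw [Finset.sum_const, Finset.card_univ, Fintype.card_fin]
            push_cast; ring
    have hn1 : (0:ℝ) < (n:ℝ) + 1 := by positivity
    rw [abs_le] at hsum
    have : -Mc ≤ (∑ j : Fin (n+1),
        c (t * (1 - (((j:ℕ):ℝ) + 1) / ((n:ℝ) + 1))) (R * ξ j + x)) / ((n:ℝ) + 1) := by
      rw [le_div_iff₀ hn1]
      nlinarith [hsum.1]
    nlinarith
  calc |v₀ (R * ξ (Fin.last n) + x)| *
        Real.exp (-(t * ((∑ j : Fin (n+1), (x + R * ξ j) ^ 2) / ((n:ℝ) + 1)))) *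
        Real.exp (-(t * ((∑ j : Fin (n+1),
          c (t * (1 - (((j:ℕ):ℝ) + 1) / ((n:ℝ) + 1))) (R * ξ j + x)) / ((n:ℝ) + 1))))
      ≤ Mv * 1 * Real.exp (t * Mc) := by
        have h0v : (0:ℝ) ≤ Mv := (abs_nonneg _).trans (hMv 0)
        gcongr <;> first | exact (Real.exp_pos _).le | exact hMv _
    _ = Mv * Real.exp (t * Mc) := by ring


/-- **Alternate Feynman–Kac expression.** For sufficiently small `t > 0` (in particular
`2t ≤ 1`), the Feynman–Kac type Wiener integral `v(t,x)` also equals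
`∫_{C_W} v₀(w(2t)+x) exp(−(1/2)∫₀^{2t} (x+w(s))² ds)
  exp(−(1/2)∫₀^{2t} c(t−s/2, w(s)+x) ds) dm_W(w)`. -/
theorem wienerFK_alternate_expression
    (μ : Measure CW) (hμ : IsWienerMeasure μ)
    (v₀ : ℝ → ℝ) (hv₀c : Continuous v₀) (hv₀b : ∃ M : ℝ, ∀ x : ℝ, |v₀ x| ≤ M)
    (hv₀0 : Tendsto v₀ (cocompact ℝ) (𝓝 0))
    (c : ℝ → ℝ → ℝ)
    (hc_cont : ContinuousOn (fun p : ℝ × ℝ => c p.1 p.2) (Set.Ici 0 ×ˢ Set.univ))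
    (hc_bdd : ∃ M : ℝ, ∀ s ∈ Set.Ici (0:ℝ), ∀ x : ℝ, |c s x| ≤ M)
    (hc_C1 : ContDiffOn ℝ 1 (fun p : ℝ × ℝ => c p.1 p.2) (Set.Ioi 0 ×ˢ Set.univ))
    (hc_space : ∀ j ≤ 4,
      ContinuousOn (fun p : ℝ × ℝ => iteratedDeriv j (fun y => c p.1 y) p.2)
        (Set.Ioi 0 ×ˢ Set.univ) ∧
      ∃ M : ℝ, ∀ s > (0:ℝ), ∀ x : ℝ, |iteratedDeriv j (fun y => c s y) x| ≤ M) :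
    ∃ t₀ : ℝ, 0 < t₀ ∧ 2 * t₀ ≤ 1 ∧ ∀ t : ℝ, 0 < t → t ≤ t₀ → ∀ x : ℝ,
      wienerFK μ v₀ c t x =
        ∫ w : CW,
          v₀ (w.eval (2 * t) + x) *
            Real.exp (-(1 / 2 * ∫ s in (0:ℝ)..(2 * t), (x + w.eval s) ^ 2)) *
            Real.exp (-(1 / 2 * ∫ s in (0:ℝ)..(2 * t),
              c (t - s / 2) (w.eval s + x))) ∂μ := by
  obtain ⟨Mv, hMv⟩ := hv₀b
  obtain ⟨Mc, hMc⟩ := hc_bdd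
  haveI := hμ.prob
  refine ⟨1/2, one_half_pos, by norm_num, ?_⟩
  intro t ht ht' x
  have ha : (0:ℝ) < 2 * t := by linarith
  have ha1 : 2 * t ≤ 1 := by linarith
  set R := Real.sqrt (2 * t) with hRdef
  have hR : (0:ℝ) < R := Real.sqrt_pos.mpr ha
  -- grid facts
  have hτmono : ∀ n : ℕ, StrictMono (fun j : Fin (n+1) => (((j:ℕ):ℝ) + 1)/((n:ℝ) + 1)) := by
    intro n i j hij
    have h1 : ((i:ℕ):ℝ) + 1 < ((j:ℕ):ℝ) + 1 := by
      have : (i:ℕ) < (j:ℕ) := Fin.lt_def.mp hij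
      push_cast
      linarith [(by exact_mod_cast this : ((i:ℕ):ℝ) < ((j:ℕ):ℝ))]
    exact div_lt_div_of_pos_right h1 (by positivity)
  have hτpos : ∀ (n : ℕ) (j : Fin (n+1)), 0 < (((j:ℕ):ℝ) + 1)/((n:ℝ) + 1) := by
    intro n j; positivity
  have hτle : ∀ (n : ℕ) (j : Fin (n+1)), (((j:ℕ):ℝ) + 1)/((n:ℝ) + 1) ≤ 1 := by
    intro n j
    rw [div_le_one (by positivity)]
    have : ((j:ℕ):ℝ) ≤ (n:ℝ) := by exact_mod_cast Nat.lt_succ_iff.mp j.isLt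
    linarith
  have haτ : ∀ (n : ℕ) (j : Fin (n+1)), 2 * t * ((((j:ℕ):ℝ) + 1)/((n:ℝ) + 1)) ≤ 1 := by
    intro n j
    have := mul_le_mul_of_nonneg_left (hτle n j) ha.le
    linarith
  have hlast : ∀ n : ℕ, ((((Fin.last n):ℕ):ℝ) + 1)/((n:ℝ) + 1) = 1 := by
    intro n
    rw [Fin.val_last]
    exact div_self (by positivity)
  -- Step 1: scaling identity for cylinder functions
  have step1 : ∀ n : ℕ,
      ∫ w : CW, phiFK v₀ c t x R n (fun j => w.eval ((((j:ℕ):ℝ) + 1)/((n:ℝ) + 1))) ∂μ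
      = ∫ w : CW, phiFK v₀ c t x R n
          (fun j => R⁻¹ * w.eval (2 * t * ((((j:ℕ):ℝ) + 1)/((n:ℝ) + 1)))) ∂μ := by
    intro n
    have h := cylinder_scale μ hμ (fun j : Fin (n+1) => (((j:ℕ):ℝ) + 1)/((n:ℝ) + 1))
      (hτmono n) (hτpos n) (hτle n) ha (haτ n) (phiFK v₀ c t x R n)
      (phiFK_cont hv₀c hc_cont ht n)
    rw [← hRdef] at h
    exact h
  -- Step 2: convergence to the LHS
  have step2 : Tendsto (fun n : ℕ =>
      ∫ w : CW, phiFK v₀ c t x R n (fun j => w.eval ((((j:ℕ):ℝ) + 1)/((n:ℝ) + 1))) ∂μ)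
      atTop (𝓝 (∫ w : CW,
        v₀ (R * w.eval 1 + x) *
          Real.exp (-(t * ∫ s in (0:ℝ)..1, (x + R * w.eval s) ^ 2)) *
          Real.exp (-(t * ∫ s in (0:ℝ)..1, c (t * (1 - s)) (R * w.eval s + x))) ∂μ)) := by
    refine tendsto_integral_of_dominated_convergence (fun _ => Mv * Real.exp (t * Mc))
      (fun n => ?_) (integrable_const _) (fun n => Eventually.of_forall fun w => ?_)
      (Eventually.of_forall fun w => ?_)
    · exact ((phiFK_cont hv₀c hc_cont ht n).measurable.comp
        (measurable_evalVec _)).aestronglyMeasurable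
    · rw [Real.norm_eq_abs]
      exact phiFK_bound hMv hMc ht n _
    · have hco : Continuous w.eval := CW.continuous_eval' w
      have hg1 : ContinuousOn (fun s : ℝ => (x + R * w.eval s) ^ 2) (Set.Icc 0 1) :=
        (((continuous_const.add (continuous_const.mul hco)).pow 2)).continuousOn
      have hg2 : ContinuousOn (fun s : ℝ => c (t * (1 - s)) (R * w.eval s + x))
          (Set.Icc 0 1) := by
        have hmap : Continuous fun s : ℝ => ((t * (1 - s), R * w.eval s + x) : ℝ × ℝ) :=
          (continuous_const.mul (continuous_const.sub continuous_id)).prodMk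
            ((continuous_const.mul hco).add continuous_const)
        exact hc_cont.comp hmap.continuousOn
          (fun s hs => ⟨mul_nonneg ht.le (by linarith [hs.2]), Set.mem_univ _⟩)
      have hB := (Real.continuous_exp.tendsto _).comp
        (((tendsto_riemannSum hg1).const_mul t).neg)
      have hC := (Real.continuous_exp.tendsto _).comp
        (((tendsto_riemannSum hg2).const_mul t).neg)
      have heq : ∀ n : ℕ,
          phiFK v₀ c t x R n (fun j => w.eval ((((j:ℕ):ℝ) + 1)/((n:ℝ) + 1)))
          = v₀ (R * w.eval 1 + x) *
            Real.exp (-(t * ((∑ j : Fin (n+1),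
              (x + R * w.eval ((((j:ℕ):ℝ) + 1)/((n:ℝ) + 1))) ^ 2) / ((n:ℝ) + 1)))) *
            Real.exp (-(t * ((∑ j : Fin (n+1),
              c (t * (1 - (((j:ℕ):ℝ) + 1)/((n:ℝ) + 1)))
                (R * w.eval ((((j:ℕ):ℝ) + 1)/((n:ℝ) + 1)) + x)) / ((n:ℝ) + 1)))) := by
        intro n
        unfold phiFK
        simp only [hlast]
      refine Tendsto.congr (fun n => (heq n).symm) ?_
      exact (tendsto_const_nhds.mul hB).mul hC
  -- Step 3: convergence to the RHS
  have step3 : Tendsto (fun n : ℕ =>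
      ∫ w : CW, phiFK v₀ c t x R n
        (fun j => R⁻¹ * w.eval (2 * t * ((((j:ℕ):ℝ) + 1)/((n:ℝ) + 1)))) ∂μ)
      atTop (𝓝 (∫ w : CW,
        v₀ (w.eval (2 * t) + x) *
          Real.exp (-(1 / 2 * ∫ s in (0:ℝ)..(2 * t), (x + w.eval s) ^ 2)) *
          Real.exp (-(1 / 2 * ∫ s in (0:ℝ)..(2 * t), c (t - s / 2) (w.eval s + x))) ∂μ)) := by
    refine tendsto_integral_of_dominated_convergence (fun _ => Mv * Real.exp (t * Mc))
      (fun n => ?_) (integrable_const _) (fun n => Eventually.of_forall fun w => ?_)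
      (Eventually.of_forall fun w => ?_)
    · refine ((phiFK_cont hv₀c hc_cont ht n).measurable.comp ?_).aestronglyMeasurable
      exact measurable_pi_lambda _ fun j => ((CW.continuous_eval _).measurable).const_mul _
    · rw [Real.norm_eq_abs]
      exact phiFK_bound hMv hMc ht n _
    · have hco : Continuous w.eval := CW.continuous_eval' w
      have hco2 : Continuous fun s : ℝ => w.eval (2 * t * s) :=
        hco.comp (continuous_const.mul continuous_id)
      have hg1 : ContinuousOn (fun s : ℝ => (x + w.eval (2 * t * s)) ^ 2) (Set.Icc 0 1) :=
        (((continuous_const.add hco2).pow 2)).continuousOn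
      have hg2 : ContinuousOn (fun s : ℝ => c (t * (1 - s)) (w.eval (2 * t * s) + x))
          (Set.Icc 0 1) := by
        have hmap : Continuous fun s : ℝ => ((t * (1 - s), w.eval (2 * t * s) + x) : ℝ × ℝ) :=
          (continuous_const.mul (continuous_const.sub continuous_id)).prodMk
            (hco2.add continuous_const)
        exact hc_cont.comp hmap.continuousOn
          (fun s hs => ⟨mul_nonneg ht.le (by linarith [hs.2]), Set.mem_univ _⟩)
      have hB := (Real.continuous_exp.tendsto _).comp
        (((tendsto_riemannSum hg1).const_mul t).neg)
      have hC := (Real.continuous_exp.tendsto _).comp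
        (((tendsto_riemannSum hg2).const_mul t).neg)
      have hcancel : ∀ y : ℝ, R * (R⁻¹ * y) = y := fun y => by
        field_simp
      have heq : ∀ n : ℕ,
          phiFK v₀ c t x R n
            (fun j => R⁻¹ * w.eval (2 * t * ((((j:ℕ):ℝ) + 1)/((n:ℝ) + 1))))
          = v₀ (w.eval (2 * t) + x) *
            Real.exp (-(t * ((∑ j : Fin (n+1),
              (x + w.eval (2 * t * ((((j:ℕ):ℝ) + 1)/((n:ℝ) + 1)))) ^ 2) / ((n:ℝ) + 1)))) *
            Real.exp (-(t * ((∑ j : Fin (n+1),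
              c (t * (1 - (((j:ℕ):ℝ) + 1)/((n:ℝ) + 1)))
                (w.eval (2 * t * ((((j:ℕ):ℝ) + 1)/((n:ℝ) + 1))) + x)) / ((n:ℝ) + 1)))) := by
        intro n
        unfold phiFK
        simp only [hcancel, hlast, mul_one]
      -- identify the limit values
      have e1 : t * ∫ s in (0:ℝ)..1, (x + w.eval (2 * t * s)) ^ 2
          = 1 / 2 * ∫ s in (0:ℝ)..(2 * t), (x + w.eval s) ^ 2 := by
        have h := intervalIntegral.integral_comp_mul_left
          (fun u => (x + w.eval u) ^ 2) (ne_of_gt ha) (a := 0) (b := 1)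
        rw [mul_zero, mul_one, smul_eq_mul] at h
        rw [h, ← mul_assoc]
        congr 1
        field_simp
      have e2 : t * ∫ s in (0:ℝ)..1, c (t * (1 - s)) (w.eval (2 * t * s) + x)
          = 1 / 2 * ∫ s in (0:ℝ)..(2 * t), c (t - s / 2) (w.eval s + x) := by
        have hfun : (fun s : ℝ => c (t * (1 - s)) (w.eval (2 * t * s) + x))
            = fun s : ℝ => (fun u => c (t - u / 2) (w.eval u + x)) (2 * t * s) := by
          funext s
          simp only
          congr 1
          ring
        rw [hfun]
        have h := intervalIntegral.integral_comp_mul_left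
          (fun u => c (t - u / 2) (w.eval u + x)) (ne_of_gt ha) (a := 0) (b := 1)
        rw [mul_zero, mul_one, smul_eq_mul] at h
        rw [h, ← mul_assoc]
        congr 1
        field_simp
      rw [← e1, ← e2]
      refine Tendsto.congr (fun n => (heq n).symm) ?_
      exact (tendsto_const_nhds.mul hB).mul hC
  have hkey := tendsto_nhds_unique (step2.congr step1) step3
  calc wienerFK μ v₀ c t x
      = ∫ w : CW,
          v₀ (R * w.eval 1 + x) *
            Real.exp (-(t * ∫ s in (0:ℝ)..1, (x + R * w.eval s) ^ 2)) *
            Real.exp (-(t * ∫ s in (0:ℝ)..1, c (t * (1 - s)) (R * w.eval s + x))) ∂μ := by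
        unfold wienerFK
        rw [← hRdef]
    _ = _ := hkey

end
end
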